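/- arXiv:2110.12263 — 7 statements merged into one kernel-verified Lean document; each statement's English description precedes it below -/
import Mathlib

section
/- Let i ≥ 1 be an integer, let t > 0, let w : ℝ → ℝ be i times continuously differentiable on [0,t], and let K : ℝ × ℝ → ℝ be such that τ ↦ K(t,τ) is i times continuously differentiable on [0,t] and additionally satisfies K^(j)(t,0) = 0 for every j ∈ {0,1,…,i−1} (the bivariate feedthrough non-asymptotic kernel condition at τ = 0). Then ∫₀ᵗ K(t,τ)·w^(i)(τ) dτ = Σ_{j=0}^{i−1} (−1)^{i−j−1} w^(j)(t) K^(i−j−1)(t,t) + (−1)^i ∫₀ᵗ K^(i)(t,τ)·w(τ) dτ; i.e., the Volterra image of w^(i) depends only on current values of w and its derivatives and on the Volterra image of w, with no dependence on the initial conditions w^(j)(0). -/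
/-- For a kernel satisfying the BF-NK condition `K^(j)(t,0) = 0` for all
`j < i`, the Volterra image of `w^(i)` depends only on the current values of
`w` and its derivatives and on the Volterra image of `w` itself: the
initial-condition terms vanish. -/
theorem volterra_image_of_iterated_deriv_BFNK
    (i : ℕ) (hi : 1 ≤ i) (t : ℝ) (ht : 0 < t)
    (w : ℝ → ℝ) (K : ℝ → ℝ → ℝ)
    (hw : ContDiffOn ℝ i w (Set.Icc 0 t))
    (hK : ContDiffOn ℝ i (K t) (Set.Icc 0 t))
    (hBFNK : ∀ j < i, iteratedDerivWithin j (K t) (Set.Icc 0 t) 0 = 0) :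
    ∫ τ in (0:ℝ)..t, K t τ * iteratedDerivWithin i w (Set.Icc 0 t) τ
      = (∑ j ∈ Finset.range i,
            (-1 : ℝ) ^ (i - j - 1) * iteratedDerivWithin j w (Set.Icc 0 t) t
              * iteratedDerivWithin (i - j - 1) (K t) (Set.Icc 0 t) t)
        + (-1 : ℝ) ^ i
            * ∫ τ in (0:ℝ)..t, iteratedDerivWithin i (K t) (Set.Icc 0 t) τ * w τ := by
  set S := Set.Icc (0:ℝ) t with hS
  have hUD : UniqueDiffOn ℝ S := uniqueDiffOn_Icc ht
  have huIcc : Set.uIcc (0:ℝ) t = S := Set.uIcc_of_le ht.le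
  have key : ∀ m ≤ i,
      ∫ τ in (0:ℝ)..t, K t τ * iteratedDerivWithin i w S τ
        = (∑ p ∈ Finset.range m, (-1:ℝ)^p * iteratedDerivWithin p (K t) S t
              * iteratedDerivWithin (i - p - 1) w S t)
          + (-1:ℝ)^m * ∫ τ in (0:ℝ)..t,
              iteratedDerivWithin m (K t) S τ * iteratedDerivWithin (i - m) w S τ := by
    intro m hm
    induction m with
    | zero => simp
    | succ m ih =>
      have hm' : m < i := hm
      rw [ih hm'.le]
      have hstep :
          ∫ τ in (0:ℝ)..t, iteratedDerivWithin m (K t) S τ * iteratedDerivWithin (i - m) w S τ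
            = iteratedDerivWithin m (K t) S t * iteratedDerivWithin (i - m - 1) w S t
              - iteratedDerivWithin m (K t) S 0 * iteratedDerivWithin (i - m - 1) w S 0
              - ∫ τ in (0:ℝ)..t,
                  iteratedDerivWithin (m + 1) (K t) S τ * iteratedDerivWithin (i - m - 1) w S τ := by
        apply intervalIntegral.integral_mul_deriv_eq_deriv_mul_of_hasDerivWithinAt
          (u := iteratedDerivWithin m (K t) S)
          (u' := iteratedDerivWithin (m + 1) (K t) S)
          (v := iteratedDerivWithin (i - m - 1) w S)
          (v' := iteratedDerivWithin (i - m) w S)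
        · intro x hx
          rw [huIcc] at hx
          have hd := (hK.differentiableOn_iteratedDerivWithin
            (by exact_mod_cast hm') hUD x hx).hasDerivWithinAt
          rw [huIcc, iteratedDerivWithin_succ]
          exact hd
        · intro x hx
          rw [huIcc] at hx
          have hlt : i - m - 1 < i := by omega
          have hd := (hw.differentiableOn_iteratedDerivWithin
            (by exact_mod_cast hlt) hUD x hx).hasDerivWithinAt
          have heq : i - m = i - m - 1 + 1 := by omega
          rw [huIcc, heq, iteratedDerivWithin_succ]
          exact hd
        · apply ContinuousOn.intervalIntegrable
          rw [huIcc]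
          exact hK.continuousOn_iteratedDerivWithin (by exact_mod_cast hm') hUD
        · apply ContinuousOn.intervalIntegrable
          rw [huIcc]
          exact hw.continuousOn_iteratedDerivWithin (by exact_mod_cast (by omega : i - m ≤ i)) hUD
      rw [hstep, hBFNK m hm']
      rw [Finset.sum_range_succ, show i - (m + 1) = i - m - 1 from by omega]
      ring
  have hkey := key i le_rfl
  rw [hkey]
  congr 1
  · rw [← Finset.sum_range_reflect]
    apply Finset.sum_congr rfl
    intro j hj
    have hj' : j < i := Finset.mem_range.mp hj
    have h1 : i - 1 - j = i - j - 1 := by omega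
    have h2 : i - (i - j - 1) - 1 = j := by omega
    rw [h1, h2]
    ring
  · congr 1
    apply intervalIntegral.integral_congr
    intro x hx
    simp [Nat.sub_self]
end

section
/- Let ω > 0, ω̄ > 0 and δ ∈ ℕ with δ ≥ 1, and define the kernel K : ℝ × ℝ → ℝ by K(t,τ) = exp(−ω(t−τ))·(1 − exp(−ω̄ τ))^δ. Then: (i) for every t ∈ ℝ and every j ∈ {0,1,…,δ−1}, the j-th derivative of the function τ ↦ K(t,τ) evaluated at τ = 0 equals 0; and (ii) for every t > 0, K(t,t) = (1 − exp(−ω̄ t))^δ > 0. In particular K is a δ-th order bivariate feedthrough non-asymptotic kernel. -/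
/-- The kernel `K(t,τ) = exp(−ω(t−τ))·(1 − exp(−ω̄τ))^δ` is a `δ`-th order
bivariate feedthrough non-asymptotic kernel: all derivatives with respect to
the second argument up to order `δ − 1` vanish at `τ = 0`, and the diagonal
value `K(t,t) = (1 − exp(−ω̄t))^δ` is strictly positive for `t > 0`. -/
theorem BFNK_kernel_properties
    (ω ω' : ℝ) (hω : 0 < ω) (hω' : 0 < ω') (δ : ℕ) (hδ : 1 ≤ δ)
    (K : ℝ → ℝ → ℝ)
    (hK : K = fun t τ => Real.exp (-ω * (t - τ)) * (1 - Real.exp (-ω' * τ)) ^ δ) :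
    (∀ t : ℝ, ∀ j < δ, iteratedDeriv j (K t) 0 = 0) ∧
    (∀ t : ℝ, 0 < t →
      K t t = (1 - Real.exp (-ω' * t)) ^ δ ∧ 0 < (1 - Real.exp (-ω' * t)) ^ δ) := by
  subst hK
  constructor
  · intro t j hjδ
    have key : ∀ j, j ≤ δ → ∃ g : ℝ → ℝ, ContDiff ℝ (⊤:ℕ∞) g ∧
        iteratedDeriv j (fun τ => Real.exp (-ω * (t - τ)) * (1 - Real.exp (-ω' * τ)) ^ δ)
          = fun τ => g τ * (1 - Real.exp (-ω' * τ)) ^ (δ - j) := by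
      intro j hj
      induction j with
      | zero =>
        exact ⟨fun τ => Real.exp (-ω * (t - τ)), by fun_prop, by simp [iteratedDeriv_zero]⟩
      | succ n ih =>
        obtain ⟨g, hg, hgd⟩ := ih (Nat.le_of_succ_le hj)
        obtain ⟨m, hm⟩ : ∃ m, δ - n = m + 1 := ⟨δ - (n+1), by omega⟩
        have hm2 : δ - (n + 1) = m := by omega
        have hdg : ContDiff ℝ (⊤:ℕ∞) (deriv g) := (contDiff_infty_iff_deriv.mp hg).2
        refine ⟨fun τ => deriv g τ * (1 - Real.exp (-ω' * τ))
            + g τ * ((m + 1 : ℕ) * (ω' * Real.exp (-ω' * τ))), ?_, ?_⟩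
        · fun_prop
        · funext τ
          rw [iteratedDeriv_succ, hgd, hm2]
          have hexp : HasDerivAt (fun τ : ℝ => Real.exp (-ω' * τ))
              (Real.exp (-ω' * τ) * (-ω' * 1)) τ :=
            ((hasDerivAt_id τ).const_mul (-ω')).exp
          have hh : HasDerivAt (fun τ : ℝ => 1 - Real.exp (-ω' * τ))
              (ω' * Real.exp (-ω' * τ)) τ := by
            have := hexp.const_sub (1:ℝ)
            refine this.congr_deriv ?_
            ring
          have hpow : HasDerivAt (fun τ : ℝ => (1 - Real.exp (-ω' * τ)) ^ (δ - n))
              ((δ - n : ℕ) * (1 - Real.exp (-ω' * τ)) ^ (δ - n - 1)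
                * (ω' * Real.exp (-ω' * τ))) τ := hh.pow _
          have hg' : HasDerivAt g (deriv g τ) τ :=
            ((hg.differentiable (by simp)) τ).hasDerivAt
          have total : deriv (fun τ => g τ * (1 - Real.exp (-ω' * τ)) ^ (δ - n)) τ = _ := (hg'.mul hpow).deriv
          rw [total, hm]
          simp only [Nat.add_sub_cancel]
          push_cast
          ring
    obtain ⟨g, hg, hgd⟩ := key j (le_of_lt hjδ)
    rw [hgd]
    simp only []
    have : (1 - Real.exp (-ω' * (0:ℝ))) = 0 := by simp
    simp [this, zero_pow (show δ - j ≠ 0 by omega)]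
  · intro t ht
    have h1 : Real.exp (-ω' * t) < 1 := by
      apply Real.exp_lt_one_iff.mpr
      nlinarith
    constructor
    · simp
    · exact pow_pos (by linarith) δ
end

section
/- Let ω > 0, ω̄ > 0 and δ ∈ ℕ, define K(t,τ) = exp(−ω(t−τ))·(1 − exp(−ω̄ τ))^δ, let j ∈ ℕ, and let w : ℝ → ℝ be continuous. Define ξ : ℝ → ℝ by ξ(t) = ∫₀ᵗ K^(j)(t,τ)·w(τ) dτ, where K^(j) is the j-th derivative of K with respect to its second argument. Then ξ(0) = 0 and, for every t ≥ 0, ξ is differentiable at t with ξ'(t) = −ω·ξ(t) + K^(j)(t,t)·w(t); that is, the Volterra image of w induced by K^(j) is realized as the output of a BIBO-stable linear time-varying scalar system. -/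
lemma iteratedDeriv_const_mul_fun {f : ℝ → ℝ} {n : ℕ} (hf : ContDiff ℝ n f) (c : ℝ) :
    iteratedDeriv n (fun x => c * f x) = fun x => c * iteratedDeriv n f x := by
  funext x
  have h := iteratedFDeriv_const_smul_apply' (a := c) (x := x) hf.contDiffAt
  simp only [iteratedDeriv_eq_iteratedFDeriv, smul_eq_mul] at h ⊢
  rw [h]
  simp

/-- The Volterra image `ξ(t) = ∫₀ᵗ K^(j)(t,τ)·w(τ) dτ` induced by the `j`-th
derivative (in the second argument) of the kernel
`K(t,τ) = exp(−ω(t−τ))·(1 − exp(−ω̄τ))^δ` is realized as the output of the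
BIBO-stable linear time-varying scalar system
`ξ'(t) = −ω·ξ(t) + K^(j)(t,t)·w(t)`, `ξ(0) = 0`. -/
theorem volterra_image_LTV_realization
    (ω ω' : ℝ) (hω : 0 < ω) (hω' : 0 < ω') (δ : ℕ)
    (K : ℝ → ℝ → ℝ)
    (hK : K = fun t τ => Real.exp (-ω * (t - τ)) * (1 - Real.exp (-ω' * τ)) ^ δ)
    (j : ℕ) (w : ℝ → ℝ) (hw : Continuous w)
    (ξ : ℝ → ℝ)
    (hξ : ξ = fun t => ∫ τ in (0:ℝ)..t, iteratedDeriv j (K t) τ * w τ) :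
    ξ 0 = 0 ∧
    ∀ t : ℝ, 0 ≤ t →
      HasDerivAt ξ (-ω * ξ t + iteratedDeriv j (K t) t * w t) t := by
  set F : ℝ → ℝ := fun τ => Real.exp (ω * τ) * (1 - Real.exp (-ω' * τ)) ^ δ with hFdef
  have hF : ContDiff ℝ j F := by
    apply ContDiff.mul
    · exact (Real.contDiff_exp.comp (contDiff_const.mul contDiff_id)).of_le le_top
    · exact ((contDiff_const.sub
        (Real.contDiff_exp.comp (contDiff_const.mul contDiff_id))).pow δ).of_le le_top
  have hKt : ∀ t : ℝ, K t = fun τ => Real.exp (-ω * t) * F τ := by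
    intro t; funext τ
    simp only [hK, hFdef]
    rw [show -ω * (t - τ) = -ω * t + ω * τ by ring, Real.exp_add]
    ring
  have hiter : ∀ t τ : ℝ,
      iteratedDeriv j (K t) τ = Real.exp (-ω * t) * iteratedDeriv j F τ := by
    intro t τ
    rw [hKt t, iteratedDeriv_const_mul_fun hF]
  set g : ℝ → ℝ := fun τ => iteratedDeriv j F τ * w τ with hgdef
  have hg : Continuous g := (hF.continuous_iteratedDeriv j le_rfl).mul hw
  have hξ' : ξ = fun t => Real.exp (-ω * t) * ∫ τ in (0:ℝ)..t, g τ := by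
    funext t
    simp only [hξ]
    rw [← intervalIntegral.integral_const_mul]
    congr 1; funext τ; rw [hiter]; ring
  constructor
  · simp [hξ']
  · intro t _
    have h1 : HasDerivAt (fun s : ℝ => Real.exp (-ω * s)) (-ω * Real.exp (-ω * t)) t := by
      simpa [mul_comm] using ((hasDerivAt_id t).const_mul (-ω)).exp
    have h2 : HasDerivAt (fun s => ∫ τ in (0:ℝ)..s, g τ) (g t) t :=
      (hg.integral_hasStrictDerivAt 0 t).hasDerivAt
    have := h1.fun_mul h2
    rw [hξ']
    refine this.congr_deriv ?_
    simp only [hiter, hgdef]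
    ring
end

section
/- Let n ≥ 1 be an integer, let a₀,…,a_{n−1} ∈ ℝ, let t > 0, and let y : ℝ → ℝ be n times continuously differentiable on [0,t] satisfying the linear differential equation y^(n)(s) = Σ_{p=0}^{n−1} a_p · y^(p)(s) for all s ∈ [0,t]. Let K : ℝ × ℝ → ℝ be such that τ ↦ K(t,τ) is n times continuously differentiable on [0,t] with K^(j)(t,0) = 0 for all j ∈ {0,…,n−1}. For r ∈ {0,…,n−1} define z_r(s) = y^(r)(s) − Σ_{p=0}^{r−1} a_{n−r+p} · y^(p)(s) (the observer canonical form state variables). Then the following identity holds: (−1)^{n−1} ∫₀ᵗ K^(n)(t,τ) y(τ) dτ + Σ_{p=0}^{n−1} a_p (−1)^p ∫₀ᵗ K^(p)(t,τ) y(τ) dτ = Σ_{r=0}^{n−1} (−1)^{n−r−1} K^(n−r−1)(t,t) · z_r(t). -/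
open intervalIntegral Set MeasureTheory in
lemma ibp_aux (t : ℝ) (ht : 0 < t) (u v u' v' : ℝ → ℝ)
    (hu : ∀ x ∈ Icc (0:ℝ) t, HasDerivWithinAt u (u' x) (Icc 0 t) x)
    (hv : ∀ x ∈ Icc (0:ℝ) t, HasDerivWithinAt v (v' x) (Icc 0 t) x)
    (hu' : ContinuousOn u' (Icc 0 t)) (hv' : ContinuousOn v' (Icc 0 t)) :
    ∫ x in (0:ℝ)..t, u' x * v x
      = u t * v t - u 0 * v 0 - ∫ x in (0:ℝ)..t, u x * v' x := by
  have huIcc : uIcc (0:ℝ) t = Icc 0 t := uIcc_of_le ht.le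
  have hcu : ContinuousOn u (Icc 0 t) := fun x hx => (hu x hx).continuousWithinAt
  have hcv : ContinuousOn v (Icc 0 t) := fun x hx => (hv x hx).continuousWithinAt
  have hiu' : IntervalIntegrable u' MeasureTheory.volume 0 t :=
    (hu'.mono huIcc.subset).intervalIntegrable
  have hiv' : IntervalIntegrable v' MeasureTheory.volume 0 t :=
    (hv'.mono huIcc.subset).intervalIntegrable
  have key := intervalIntegral.integral_deriv_mul_eq_sub_of_hasDerivWithinAt
    (a := 0) (b := t) (u := u) (v := v) (u' := u') (v' := v')
    (by rw [huIcc]; exact hu) (by rw [huIcc]; exact hv) hiu' hiv'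
  have h1 : IntervalIntegrable (fun x => u' x * v x) MeasureTheory.volume 0 t :=
    ((hu'.mul hcv).mono huIcc.subset).intervalIntegrable
  have h2 : IntervalIntegrable (fun x => u x * v' x) MeasureTheory.volume 0 t :=
    ((hcu.mul hv').mono huIcc.subset).intervalIntegrable
  rw [intervalIntegral.integral_add h1 h2] at key
  linarith

open intervalIntegral Set MeasureTheory in
lemma volterra_parts (t : ℝ) (ht : 0 < t) :
    ∀ (m : ℕ) (g f : ℝ → ℝ), ContDiffOn ℝ m g (Icc 0 t) → ContDiffOn ℝ m f (Icc 0 t) →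
    (∀ j < m, iteratedDerivWithin j g (Icc 0 t) 0 = 0) →
    ∫ τ in (0:ℝ)..t, iteratedDerivWithin m g (Icc 0 t) τ * f τ
      = (∑ i ∈ Finset.range m, (-1:ℝ)^i * iteratedDerivWithin (m-1-i) g (Icc 0 t) t
            * iteratedDerivWithin i f (Icc 0 t) t)
        + (-1:ℝ)^m * ∫ τ in (0:ℝ)..t, g τ * iteratedDerivWithin m f (Icc 0 t) τ := by
  have hS : UniqueDiffOn ℝ (Icc (0:ℝ) t) := uniqueDiffOn_Icc ht
  have huIcc : uIcc (0:ℝ) t = Icc 0 t := uIcc_of_le ht.le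
  have h0mem : (0:ℝ) ∈ Icc (0:ℝ) t := ⟨le_refl 0, ht.le⟩
  have htmem : t ∈ Icc (0:ℝ) t := ⟨ht.le, le_refl t⟩
  intro m
  induction m with
  | zero =>
    intro g f hg hf _
    simp [iteratedDerivWithin_zero]
  | succ m IH =>
    intro g f hg hf hbd
    have hg' : ContDiffOn ℝ m (derivWithin g (Icc 0 t)) (Icc 0 t) := by
      have := hg.derivWithin hS (m := m) ?_
      · exact this
      · exact_mod_cast le_refl _
    have hfm : ContDiffOn ℝ m f (Icc 0 t) := hf.of_le (by exact_mod_cast Nat.le_succ m)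
    have hbd' : ∀ j < m, iteratedDerivWithin j (derivWithin g (Icc 0 t)) (Icc 0 t) 0 = 0 := by
      intro j hj
      rw [← iteratedDerivWithin_succ']
      exact hbd (j+1) (by omega)
    have hcongr : ∫ τ in (0:ℝ)..t, iteratedDerivWithin (m+1) g (Icc 0 t) τ * f τ
        = ∫ τ in (0:ℝ)..t, iteratedDerivWithin m (derivWithin g (Icc 0 t)) (Icc 0 t) τ * f τ := by
      apply intervalIntegral.integral_congr
      intro τ hτ
      rw [huIcc] at hτ
      simp only []
      rw [iteratedDerivWithin_succ']
    rw [hcongr, IH (derivWithin g (Icc 0 t)) f hg' hfm hbd']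
    have hgd : ∀ x ∈ Icc (0:ℝ) t, HasDerivWithinAt g (derivWithin g (Icc 0 t) x) (Icc 0 t) x := by
      intro x hx
      exact (hg.differentiableOn
        (by simp) x hx).hasDerivWithinAt
    have hfd : ∀ x ∈ Icc (0:ℝ) t, HasDerivWithinAt (iteratedDerivWithin m f (Icc 0 t))
        (iteratedDerivWithin (m+1) f (Icc 0 t) x) (Icc 0 t) x := by
      intro x hx
      have := (hf.differentiableOn_iteratedDerivWithin (m := m)
        (by exact_mod_cast Nat.lt_succ_self m) hS x hx).hasDerivWithinAt
      rwa [← iteratedDerivWithin_succ] at this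
    have hcu' : ContinuousOn (derivWithin g (Icc 0 t)) (Icc 0 t) := by
      have := hg.continuousOn_iteratedDerivWithin (m := 1)
        (by exact_mod_cast Nat.one_le_iff_ne_zero.mpr (Nat.succ_ne_zero m)) hS
      apply this.congr
      intro x hx
      rw [iteratedDerivWithin_one]
    have hcv' : ContinuousOn (iteratedDerivWithin (m+1) f (Icc 0 t)) (Icc 0 t) :=
      hf.continuousOn_iteratedDerivWithin (by exact_mod_cast le_refl _) hS
    have hibp := ibp_aux t ht g (iteratedDerivWithin m f (Icc 0 t))
      (derivWithin g (Icc 0 t)) (iteratedDerivWithin (m+1) f (Icc 0 t)) hgd hfd hcu' hcv'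
    have hg0 : g 0 = 0 := by simpa using hbd 0 (Nat.succ_pos m)
    rw [hibp, hg0]
    have hsum : ∀ i ∈ Finset.range m,
        (-1:ℝ)^i * iteratedDerivWithin (m-1-i) (derivWithin g (Icc 0 t)) (Icc 0 t) t
            * iteratedDerivWithin i f (Icc 0 t) t
        = (-1:ℝ)^i * iteratedDerivWithin (m-i) g (Icc 0 t) t
            * iteratedDerivWithin i f (Icc 0 t) t := by
      intro i hi
      rw [Finset.mem_range] at hi
      rw [show m-i = (m-1-i)+1 by omega, iteratedDerivWithin_succ']
    rw [Finset.sum_congr rfl hsum, Finset.sum_range_succ]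
    simp only [Nat.add_sub_cancel, Nat.sub_self, iteratedDerivWithin_zero]
    ring

lemma neg_one_pow_self_mul (i : ℕ) : ((-1:ℝ))^i * (-1)^i = 1 := by
  rw [← pow_add, ← two_mul, pow_mul]; norm_num

lemma sign1 (n i : ℕ) (h : i < n) : ((-1:ℝ))^(n-1) * (-1)^i = (-1)^(n-1-i) := by
  obtain ⟨d, rfl⟩ : ∃ d, n = d + i + 1 := ⟨n-1-i, by omega⟩
  have h2 : d + i + 1 - 1 - i = d := by omega
  rw [h2, show d + i + 1 - 1 = d + i from rfl, pow_add]
  rw [mul_assoc, neg_one_pow_self_mul, mul_one]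

lemma sign2 (p i : ℕ) (h : i < p) : ((-1:ℝ))^p * (-1)^i = -(-1)^(p-1-i) := by
  obtain ⟨d, rfl⟩ : ∃ d, p = d + i + 1 := ⟨p-1-i, by omega⟩
  have h2 : d + i + 1 - 1 - i = d := by omega
  rw [h2, pow_succ, pow_add, mul_assoc, mul_comm ((-1:ℝ))]
  rw [← mul_assoc, mul_assoc ((-1:ℝ)^d), neg_one_pow_self_mul, mul_one]
  ring

lemma algebra_final (n : ℕ) (a k Y : ℕ → ℝ) :
    (-1:ℝ)^(n-1) * ∑ i ∈ Finset.range n, (-1:ℝ)^i * k (n-1-i) * Y i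
      + ∑ p ∈ Finset.range n, a p * (-1:ℝ)^p * ∑ i ∈ Finset.range p, (-1:ℝ)^i * k (p-1-i) * Y i
    = ∑ r ∈ Finset.range n, (-1:ℝ)^(n-r-1) * k (n-r-1)
        * (Y r - ∑ p ∈ Finset.range r, a (n-r+p) * Y p) := by
  have hfirst : (-1:ℝ)^(n-1) * ∑ i ∈ Finset.range n, (-1:ℝ)^i * k (n-1-i) * Y i
      = ∑ r ∈ Finset.range n, (-1:ℝ)^(n-r-1) * k (n-r-1) * Y r := by
    rw [Finset.mul_sum]
    apply Finset.sum_congr rfl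
    intro i hi
    rw [Finset.mem_range] at hi
    have : n - i - 1 = n - 1 - i := by omega
    rw [this, ← mul_assoc, ← mul_assoc, sign1 n i hi]
  have hsecond : ∑ p ∈ Finset.range n,
        a p * (-1:ℝ)^p * ∑ i ∈ Finset.range p, (-1:ℝ)^i * k (p-1-i) * Y i
      = - ∑ r ∈ Finset.range n, (-1:ℝ)^(n-r-1) * k (n-r-1)
          * ∑ p ∈ Finset.range r, a (n-r+p) * Y p := by
    simp only [Finset.mul_sum, ← Finset.sum_neg_distrib]
    rw [Finset.sum_sigma' (Finset.range n) (fun p => Finset.range p)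
        (fun p i => a p * (-1:ℝ)^p * ((-1:ℝ)^i * k (p-1-i) * Y i)),
      Finset.sum_sigma' (Finset.range n) (fun r => Finset.range r)
        (fun r q => -((-1:ℝ)^(n-r-1) * k (n-r-1) * (a (n-r+q) * Y q)))]
    apply Finset.sum_nbij' (fun x => ⟨n - x.1 + x.2, x.2⟩) (fun x => ⟨n - x.1 + x.2, x.2⟩)
    · rintro ⟨p, i⟩ h
      simp only [Finset.mem_sigma, Finset.mem_range] at h ⊢
      omega
    · rintro ⟨r, q⟩ h
      simp only [Finset.mem_sigma, Finset.mem_range] at h ⊢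
      omega
    · rintro ⟨p, i⟩ h
      simp only [Finset.mem_sigma, Finset.mem_range] at h
      dsimp only
      have e : n - (n - p + i) + i = p := by omega
      rw [e]
    · rintro ⟨r, q⟩ h
      simp only [Finset.mem_sigma, Finset.mem_range] at h
      dsimp only
      have e : n - (n - r + q) + q = r := by omega
      rw [e]
    · rintro ⟨p, i⟩ h
      simp only [Finset.mem_sigma, Finset.mem_range] at h
      obtain ⟨hp, hi⟩ := h
      simp only
      have h1 : n - (n - p + i) - 1 = p - 1 - i := by omega
      have h2 : n - (n - p + i) + i = p := by omega
      rw [h1, h2]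
      rw [show a p * (-1:ℝ)^p * ((-1:ℝ)^i * k (p-1-i) * Y i)
          = ((-1:ℝ)^p * (-1:ℝ)^i) * (a p * k (p-1-i) * Y i) by ring, sign2 p i hi]
      ring
  rw [hfirst, hsecond, ← sub_eq_add_neg, ← Finset.sum_sub_distrib]
  apply Finset.sum_congr rfl
  intro r _
  ring

/-- For an output `y` of an `n`-th order autonomous linear system in observer
canonical form (input–output realization `y^(n) = Σ_{p<n} a_p y^(p)`) and a
BF-NK kernel `K` (i.e. `K^(j)(t,0) = 0` for `j < n`), the combination of
Volterra images of `y` equals a linear combination of the observer canonical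
state variables `z_r(t) = y^(r)(t) − Σ_{p<r} a_{n−r+p} y^(p)(t)` weighted by
the diagonal kernel derivatives. -/
theorem volterra_identity_observer_canonical_form
    (n : ℕ) (hn : 1 ≤ n) (a : ℕ → ℝ) (t : ℝ) (ht : 0 < t)
    (y : ℝ → ℝ) (K : ℝ → ℝ → ℝ)
    (hy : ContDiffOn ℝ n y (Set.Icc 0 t))
    (hode : ∀ s ∈ Set.Icc (0:ℝ) t,
      iteratedDerivWithin n y (Set.Icc 0 t) s
        = ∑ p ∈ Finset.range n, a p * iteratedDerivWithin p y (Set.Icc 0 t) s)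
    (hK : ContDiffOn ℝ n (K t) (Set.Icc 0 t))
    (hBFNK : ∀ j < n, iteratedDerivWithin j (K t) (Set.Icc 0 t) 0 = 0) :
    (-1 : ℝ) ^ (n - 1)
        * (∫ τ in (0:ℝ)..t, iteratedDerivWithin n (K t) (Set.Icc 0 t) τ * y τ)
      + ∑ p ∈ Finset.range n, a p * (-1 : ℝ) ^ p
          * ∫ τ in (0:ℝ)..t, iteratedDerivWithin p (K t) (Set.Icc 0 t) τ * y τ
      = ∑ r ∈ Finset.range n,
          (-1 : ℝ) ^ (n - r - 1) * iteratedDerivWithin (n - r - 1) (K t) (Set.Icc 0 t) t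
            * (iteratedDerivWithin r y (Set.Icc 0 t) t
                - ∑ p ∈ Finset.range r, a (n - r + p) * iteratedDerivWithin p y (Set.Icc 0 t) t) := by
  have hS : UniqueDiffOn ℝ (Set.Icc (0:ℝ) t) := uniqueDiffOn_Icc ht
  have huIcc : Set.uIcc (0:ℝ) t = Set.Icc 0 t := Set.uIcc_of_le ht.le
  -- integration by parts applied to each Volterra integral
  have key : ∀ p, p ≤ n →
      ∫ τ in (0:ℝ)..t, iteratedDerivWithin p (K t) (Set.Icc 0 t) τ * y τ
        = (∑ i ∈ Finset.range p, (-1:ℝ)^i * iteratedDerivWithin (p-1-i) (K t) (Set.Icc 0 t) t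
              * iteratedDerivWithin i y (Set.Icc 0 t) t)
          + (-1:ℝ)^p * ∫ τ in (0:ℝ)..t, K t τ * iteratedDerivWithin p y (Set.Icc 0 t) τ := by
    intro p hp
    exact volterra_parts t ht p (K t) y (hK.of_le (by exact_mod_cast hp))
      (hy.of_le (by exact_mod_cast hp)) (fun j hj => hBFNK j (lt_of_lt_of_le hj hp))
  -- the ODE transfers to the bottom integrals
  have hTn : ∫ τ in (0:ℝ)..t, K t τ * iteratedDerivWithin n y (Set.Icc 0 t) τ
      = ∑ p ∈ Finset.range n,
          a p * ∫ τ in (0:ℝ)..t, K t τ * iteratedDerivWithin p y (Set.Icc 0 t) τ := by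
    have hstep : ∫ τ in (0:ℝ)..t, K t τ * iteratedDerivWithin n y (Set.Icc 0 t) τ
        = ∫ τ in (0:ℝ)..t, ∑ p ∈ Finset.range n,
            a p * (K t τ * iteratedDerivWithin p y (Set.Icc 0 t) τ) := by
      apply intervalIntegral.integral_congr
      intro τ hτ
      rw [huIcc] at hτ
      simp only []
      rw [hode τ hτ, Finset.mul_sum]
      apply Finset.sum_congr rfl
      intro p _
      ring
    rw [hstep, intervalIntegral.integral_finset_sum]
    · apply Finset.sum_congr rfl
      intro p hp
      rw [intervalIntegral.integral_const_mul]
    · intro p hp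
      rw [Finset.mem_range] at hp
      apply ContinuousOn.intervalIntegrable
      rw [huIcc]
      exact (continuousOn_const.mul (hK.continuousOn.mul
        (hy.continuousOn_iteratedDerivWithin (by exact_mod_cast hp.le) hS)))
  -- rewrite everything using `key`
  rw [key n le_rfl]
  have hps : ∀ p ∈ Finset.range n,
      a p * (-1:ℝ)^p * ∫ τ in (0:ℝ)..t, iteratedDerivWithin p (K t) (Set.Icc 0 t) τ * y τ
        = a p * (-1:ℝ)^p * (∑ i ∈ Finset.range p,
              (-1:ℝ)^i * iteratedDerivWithin (p-1-i) (K t) (Set.Icc 0 t) t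
                * iteratedDerivWithin i y (Set.Icc 0 t) t)
          + a p * ∫ τ in (0:ℝ)..t, K t τ * iteratedDerivWithin p y (Set.Icc 0 t) τ := by
    intro p hp
    rw [Finset.mem_range] at hp
    rw [key p hp.le]
    have h1 := neg_one_pow_self_mul p
    calc a p * (-1:ℝ)^p * ((∑ i ∈ Finset.range p,
              (-1:ℝ)^i * iteratedDerivWithin (p-1-i) (K t) (Set.Icc 0 t) t
                * iteratedDerivWithin i y (Set.Icc 0 t) t)
            + (-1:ℝ)^p * ∫ τ in (0:ℝ)..t, K t τ * iteratedDerivWithin p y (Set.Icc 0 t) τ)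
        = a p * (-1:ℝ)^p * (∑ i ∈ Finset.range p,
              (-1:ℝ)^i * iteratedDerivWithin (p-1-i) (K t) (Set.Icc 0 t) t
                * iteratedDerivWithin i y (Set.Icc 0 t) t)
          + ((-1:ℝ)^p * (-1:ℝ)^p)
            * (a p * ∫ τ in (0:ℝ)..t, K t τ * iteratedDerivWithin p y (Set.Icc 0 t) τ) := by
          ring
      _ = _ := by rw [h1]; ring
  rw [Finset.sum_congr rfl hps, Finset.sum_add_distrib, ← hTn]
  have hsgn : ((-1:ℝ))^(n-1) * (-1)^n = -1 := by
    obtain ⟨d, rfl⟩ : ∃ d, n = d + 1 := ⟨n-1, by omega⟩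
    rw [show d + 1 - 1 = d from rfl, pow_succ, ← mul_assoc, neg_one_pow_self_mul, one_mul]
  have halg := algebra_final n a
    (fun j => iteratedDerivWithin j (K t) (Set.Icc 0 t) t)
    (fun i => iteratedDerivWithin i y (Set.Icc 0 t) t)
  have hexp : (-1:ℝ)^(n-1)
      * ((∑ i ∈ Finset.range n, (-1:ℝ)^i * iteratedDerivWithin (n-1-i) (K t) (Set.Icc 0 t) t
            * iteratedDerivWithin i y (Set.Icc 0 t) t)
        + (-1:ℝ)^n * ∫ τ in (0:ℝ)..t, K t τ * iteratedDerivWithin n y (Set.Icc 0 t) τ)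
      = (-1:ℝ)^(n-1) * (∑ i ∈ Finset.range n,
            (-1:ℝ)^i * iteratedDerivWithin (n-1-i) (K t) (Set.Icc 0 t) t
              * iteratedDerivWithin i y (Set.Icc 0 t) t)
        - ∫ τ in (0:ℝ)..t, K t τ * iteratedDerivWithin n y (Set.Icc 0 t) τ := by
    calc _ = (-1:ℝ)^(n-1) * (∑ i ∈ Finset.range n,
            (-1:ℝ)^i * iteratedDerivWithin (n-1-i) (K t) (Set.Icc 0 t) t
              * iteratedDerivWithin i y (Set.Icc 0 t) t)
          + ((-1:ℝ)^(n-1) * (-1:ℝ)^n)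
            * ∫ τ in (0:ℝ)..t, K t τ * iteratedDerivWithin n y (Set.Icc 0 t) τ := by ring
      _ = _ := by rw [hsgn]; ring
  rw [hexp]
  linarith [halg]
end

section
/- Let A be an n×n real matrix and let (C_i)_{i∈S} be a finite family of real matrices with C_i of size m_i × n. Suppose that for each i ∈ S there exist an integer n_i, a matrix T_io ∈ ℝ^{n_i×n} of full row rank n_i, a matrix A_io ∈ ℝ^{n_i×n_i}, and a matrix C_io ∈ ℝ^{m_i×n_i} such that T_io·A = A_io·T_io, C_i = C_io·T_io, and the pair (A_io, C_io) is observable, i.e. the stacked matrix col(C_io, C_io·A_io, …, C_io·A_io^{n_i−1}) has rank n_i. Then the rank of the observability matrix of the pair (A, col_{i∈S}(C_i)), i.e. of the stacked matrix whose blocks are C_i·A^k for all i ∈ S and k ∈ {0,…,n−1}, equals the rank of the stacked matrix col_{i∈S}(T_io). -/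
/-- If each pair `(A, C i)` admits an observability decomposition with
observable part `(Aio i, Cio i)` via the full-row-rank transformation
`Tio i` (so `Tio i * A = Aio i * Tio i` and `C i = Cio i * Tio i`), then the
rank of the observability matrix of the pair `(A, col_{i∈S} (C i))` equals
the rank of the stacked matrix `col_{i∈S} (Tio i)`. -/
theorem rank_obsv_eq_rank_col_Tio
    {S : Type*} [Fintype S] [DecidableEq S] (n : ℕ)
    (A : Matrix (Fin n) (Fin n) ℝ)
    (m : S → ℕ) (C : ∀ i : S, Matrix (Fin (m i)) (Fin n) ℝ)
    (ni : S → ℕ)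
    (Tio : ∀ i : S, Matrix (Fin (ni i)) (Fin n) ℝ)
    (Aio : ∀ i : S, Matrix (Fin (ni i)) (Fin (ni i)) ℝ)
    (Cio : ∀ i : S, Matrix (Fin (m i)) (Fin (ni i)) ℝ)
    (hTiorank : ∀ i : S, (Tio i).rank = ni i)
    (hcomm : ∀ i : S, Tio i * A = Aio i * Tio i)
    (hC : ∀ i : S, C i = Cio i * Tio i)
    (hobs : ∀ i : S,
      (Matrix.of fun (p : Fin (ni i) × Fin (m i)) (c : Fin (ni i)) =>
          (Cio i * (Aio i) ^ (p.1 : ℕ)) p.2 c).rank = ni i) :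
    (Matrix.of fun (p : (Σ i : S, Fin (m i)) × Fin n) (c : Fin n) =>
        (C p.1.1 * A ^ ((p.2 : ℕ))) p.1.2 c).rank
      = (Matrix.of fun (p : Σ i : S, Fin (ni i)) (c : Fin n) =>
          Tio p.1 p.2 c).rank := by
  classical
  set M : Matrix ((Σ i : S, Fin (m i)) × Fin n) (Fin n) ℝ :=
    Matrix.of fun p c => (C p.1.1 * A ^ ((p.2 : ℕ))) p.1.2 c with hM
  set N : Matrix (Σ i : S, Fin (ni i)) (Fin n) ℝ :=
    Matrix.of fun p c => Tio p.1 p.2 c with hN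
  have key : ∀ (i : S) (k : ℕ), Tio i * A ^ k = Aio i ^ k * Tio i := by
    intro i k
    induction k with
    | zero => simp
    | succ k ih =>
      rw [pow_succ, ← Matrix.mul_assoc, ih, Matrix.mul_assoc, hcomm, ← Matrix.mul_assoc, ← pow_succ]
  have hCk : ∀ (i : S) (k : ℕ), C i * A ^ k = Cio i * Aio i ^ k * Tio i := by
    intro i k
    rw [hC, Matrix.mul_assoc, key, ← Matrix.mul_assoc]
  have hni : ∀ i : S, ni i ≤ n := fun i => (hTiorank i) ▸ (Tio i).rank_le_width
  have hspan : Submodule.span ℝ (Set.range M) = Submodule.span ℝ (Set.range N) := by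
    apply le_antisymm
    · rw [Submodule.span_le]
      rintro _ ⟨⟨⟨i, j⟩, k⟩, rfl⟩
      have hrow : M (⟨i, j⟩, k) =
          ∑ t : Fin (ni i), (Cio i * Aio i ^ (k : ℕ)) j t • N ⟨i, t⟩ := by
        ext c
        simp only [hM, hN, Matrix.of_apply, Finset.sum_apply, Pi.smul_apply, smul_eq_mul]
        rw [hCk, Matrix.mul_apply]
      rw [hrow]
      exact Submodule.sum_mem _ fun t _ =>
        Submodule.smul_mem _ _ (Submodule.subset_span ⟨⟨i, t⟩, rfl⟩)
    · rw [Submodule.span_le]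
      rintro _ ⟨⟨i, j⟩, rfl⟩
      set O : Matrix (Fin (ni i) × Fin (m i)) (Fin (ni i)) ℝ :=
        Matrix.of fun p c => (Cio i * (Aio i) ^ (p.1 : ℕ)) p.2 c with hO
      have htop : Submodule.span ℝ (Set.range O) = ⊤ := by
        apply Submodule.eq_top_of_finrank_eq
        rw [show Set.range O = Set.range O.row from rfl, ← Matrix.rank_eq_finrank_span_row, hobs i, Module.finrank_fin_fun]
      have hmem : (Pi.single j 1 : Fin (ni i) → ℝ) ∈ Submodule.span ℝ (Set.range O) := by
        rw [htop]; trivial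
      rw [show Set.range O = Set.range O.row from rfl, Submodule.mem_span_range_iff_exists_fun] at hmem
      obtain ⟨w, hw⟩ := hmem
      have hrow : N ⟨i, j⟩ =
          ∑ p : Fin (ni i) × Fin (m i),
            w p • M (⟨i, p.2⟩, Fin.castLE (hni i) p.1) := by
        ext c
        have h1 : ∀ p : Fin (ni i) × Fin (m i),
            M (⟨i, p.2⟩, Fin.castLE (hni i) p.1) c
              = ∑ t : Fin (ni i), O p t * Tio i t c := by
          intro p
          simp only [hM, hO, Matrix.of_apply, Fin.coe_castLE]
          rw [hCk, Matrix.mul_apply]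
        simp only [Finset.sum_apply, Pi.smul_apply, smul_eq_mul, h1, Finset.mul_sum]
        rw [Finset.sum_comm]
        have h2 : ∀ t : Fin (ni i),
            ∑ p : Fin (ni i) × Fin (m i), w p * (O p t * Tio i t c)
              = (Pi.single j 1 : Fin (ni i) → ℝ) t * Tio i t c := by
          intro t
          simp only [← mul_assoc]
          rw [← Finset.sum_mul]
          congr 1
          have := congrFun hw t
          simpa using this
        simp only [h2]
        simp [hN, Pi.single_apply, Finset.sum_ite_eq]
      rw [hrow]
      exact Submodule.sum_mem _ fun p _ =>
        Submodule.smul_mem _ _ (Submodule.subset_span ⟨_, rfl⟩)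
  rw [Matrix.rank_eq_finrank_span_row M, Matrix.rank_eq_finrank_span_row N, show Submodule.span ℝ (Set.range M.row) = Submodule.span ℝ (Set.range N.row) from hspan]
end

section
/- Let A be an n×n real matrix and let (C_i)_{i∈S} be a finite family of real matrices with C_i of size m_i × n. Suppose that for each i ∈ S there exist an integer n_i, a matrix T_io ∈ ℝ^{n_i×n} of full row rank n_i, matrices A_io ∈ ℝ^{n_i×n_i} and C_io ∈ ℝ^{m_i×n_i} with T_io·A = A_io·T_io, C_i = C_io·T_io, and col(C_io, C_io·A_io, …, C_io·A_io^{n_i−1}) of rank n_i, and an invertible matrix T_iz ∈ ℝ^{n_i×n_i}; set T_iα = T_iz·T_io. Then the rank of the observability matrix of the pair (A, col_{i∈S}(C_i)) (the stacked matrix of the blocks C_i·A^k for i ∈ S and k ∈ {0,…,n−1}) equals the rank of the stacked matrix col_{i∈S}(T_iα). -/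
open Matrix Submodule

/-- Each row of a product `M * N` lies in the span of the rows of `N`. -/
private lemma row_mul_mem_span {l m' n' : Type*} [Fintype m'] (M : Matrix l m' ℝ)
    (N : Matrix m' n' ℝ) (i : l) :
    (M * N) i ∈ Submodule.span ℝ (Set.range N) := by
  have h : (M * N) i = ∑ j, M i j • N j := by
    funext c
    simp [Matrix.mul_apply, Finset.sum_apply]
  rw [h]
  exact Submodule.sum_mem _ fun j _ =>
    Submodule.smul_mem _ _ (Submodule.subset_span ⟨j, rfl⟩)

/-- A matrix with `k` columns and rank `k` has rows spanning all of `ℝᵏ`. -/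
private lemma span_rows_eq_top {p : Type*} [Fintype p] {k : ℕ} (M : Matrix p (Fin k) ℝ)
    (h : M.rank = k) : Submodule.span ℝ (Set.range M) = ⊤ := by
  apply Submodule.eq_top_of_finrank_eq
  rw [show Set.range M = Set.range M.row from rfl, ← Matrix.rank_eq_finrank_span_row, h]
  simp

/-- If each pair `(A, C i)` admits an observability decomposition with
observable part `(Aio i, Cio i)` via the full-row-rank transformation
`Tio i`, and `Tiz i` is an invertible coordinate change of the observable
part, then with `Tiα i = Tiz i * Tio i` the rank of the observability matrix
of `(A, col_{i∈S} (C i))` equals the rank of the stacked matrix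
`col_{i∈S} (Tiα i)`. -/
theorem rank_obsv_eq_rank_col_Tialpha
    {S : Type*} [Fintype S] [DecidableEq S] (n : ℕ)
    (A : Matrix (Fin n) (Fin n) ℝ)
    (m : S → ℕ) (C : ∀ i : S, Matrix (Fin (m i)) (Fin n) ℝ)
    (ni : S → ℕ)
    (Tio : ∀ i : S, Matrix (Fin (ni i)) (Fin n) ℝ)
    (Aio : ∀ i : S, Matrix (Fin (ni i)) (Fin (ni i)) ℝ)
    (Cio : ∀ i : S, Matrix (Fin (m i)) (Fin (ni i)) ℝ)
    (Tiz : ∀ i : S, Matrix (Fin (ni i)) (Fin (ni i)) ℝ)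
    (Tiα : ∀ i : S, Matrix (Fin (ni i)) (Fin n) ℝ)
    (hTiorank : ∀ i : S, (Tio i).rank = ni i)
    (hcomm : ∀ i : S, Tio i * A = Aio i * Tio i)
    (hC : ∀ i : S, C i = Cio i * Tio i)
    (hobs : ∀ i : S,
      (Matrix.of fun (p : Fin (ni i) × Fin (m i)) (c : Fin (ni i)) =>
          (Cio i * (Aio i) ^ (p.1 : ℕ)) p.2 c).rank = ni i)
    (hTiz : ∀ i : S, IsUnit (Tiz i))
    (hTiα : ∀ i : S, Tiα i = Tiz i * Tio i) :
    (Matrix.of fun (p : (Σ i : S, Fin (m i)) × Fin n) (c : Fin n) =>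
        (C p.1.1 * A ^ ((p.2 : ℕ))) p.1.2 c).rank
      = (Matrix.of fun (p : Σ i : S, Fin (ni i)) (c : Fin n) =>
          Tiα p.1 p.2 c).rank := by
  -- commutation of powers
  have hTA : ∀ (i : S) (k : ℕ), Tio i * A ^ k = (Aio i) ^ k * Tio i := by
    intro i k
    induction k with
    | zero => simp
    | succ k ih =>
      rw [pow_succ, ← Matrix.mul_assoc, ih, Matrix.mul_assoc, hcomm i,
        ← Matrix.mul_assoc, ← pow_succ]
  have hCA : ∀ (i : S) (k : ℕ), C i * A ^ k = Cio i * (Aio i) ^ k * Tio i := by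
    intro i k
    rw [hC i, Matrix.mul_assoc, hTA i k, ← Matrix.mul_assoc]
  have hni : ∀ i : S, ni i ≤ n := by
    intro i
    rw [← hTiorank i]
    exact (Tio i).rank_le_width
  -- invertibility facts
  have hTizdet : ∀ i : S, IsUnit (Tiz i).det := fun i =>
    (Matrix.isUnit_iff_isUnit_det _).mp (hTiz i)
  set O : Matrix ((Σ i : S, Fin (m i)) × Fin n) (Fin n) ℝ :=
    Matrix.of fun (p : (Σ i : S, Fin (m i)) × Fin n) (c : Fin n) =>
      (C p.1.1 * A ^ ((p.2 : ℕ))) p.1.2 c with hO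
  set T : Matrix (Σ i : S, Fin (ni i)) (Fin n) ℝ :=
    Matrix.of fun (p : Σ i : S, Fin (ni i)) (c : Fin n) => Tiα p.1 p.2 c with hT
  rw [Matrix.rank_eq_finrank_span_row O, Matrix.rank_eq_finrank_span_row T]
  suffices h : Submodule.span ℝ (Set.range O) = Submodule.span ℝ (Set.range T) by
    rw [show Set.range O.row = Set.range O from rfl, show Set.range T.row = Set.range T from rfl, h]
  apply le_antisymm
  · -- rows of O are in span of rows of T
    rw [Submodule.span_le]
    rintro _ ⟨⟨⟨i, p⟩, k⟩, rfl⟩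
    have hrow : O (⟨⟨i, p⟩, k⟩ : (Σ i : S, Fin (m i)) × Fin n)
        = ((Cio i * (Aio i) ^ (k : ℕ) * (Tiz i)⁻¹) * Tiα i) p := by
      funext c
      have : Cio i * (Aio i) ^ (k : ℕ) * (Tiz i)⁻¹ * Tiα i
          = C i * A ^ (k : ℕ) := by
        rw [hTiα i, ← Matrix.mul_assoc, Matrix.mul_assoc _ (Tiz i)⁻¹ (Tiz i),
          Matrix.nonsing_inv_mul _ (hTizdet i), Matrix.mul_one, hCA i]
      rw [this]
      rfl
    rw [hrow]
    refine Submodule.span_mono ?_ (row_mul_mem_span _ (Tiα i) p)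
    rintro _ ⟨j, rfl⟩
    exact ⟨⟨i, j⟩, rfl⟩
  · -- rows of T are in span of rows of O
    rw [Submodule.span_le]
    rintro _ ⟨⟨i, j⟩, rfl⟩
    -- row j of Tiα i is in span of rows of Tio i
    have hT1 : T ⟨i, j⟩ = (Tiz i * Tio i) j := by
      funext c
      show Tiα i j c = _
      rw [hTiα i]
    rw [hT1]
    -- it suffices: every row of Tio i is in the span of the rows of O
    have key : ∀ r : Fin (ni i), Tio i r ∈ Submodule.span ℝ (Set.range O) := by
      intro r
      set Oi : Matrix (Fin (ni i) × Fin (m i)) (Fin (ni i)) ℝ :=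
        Matrix.of fun (p : Fin (ni i) × Fin (m i)) (c : Fin (ni i)) =>
          (Cio i * (Aio i) ^ (p.1 : ℕ)) p.2 c with hOi
      have htop : Submodule.span ℝ (Set.range Oi) = ⊤ :=
        span_rows_eq_top Oi (hobs i)
      have hmem : (Pi.single r 1 : Fin (ni i) → ℝ) ∈ Submodule.span ℝ (Set.range Oi) := by
        rw [htop]; trivial
      have : Tio i r = (Tio i).vecMulLinear (Pi.single r 1) := by
        simp; rfl
      rw [this]
      have := Submodule.mem_map_of_mem (f := (Tio i).vecMulLinear) hmem
      rw [Submodule.map_span] at this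
      refine Submodule.span_le.mpr ?_ this
      rintro _ ⟨_, ⟨⟨k, p⟩, rfl⟩, rfl⟩
      apply Submodule.subset_span
      refine ⟨⟨⟨i, p⟩, ⟨(k : ℕ), lt_of_lt_of_le k.isLt (hni i)⟩⟩, ?_⟩
      funext c
      show (C i * A ^ (k : ℕ)) p c = _
      rw [hCA i]
      simp [Matrix.mul_apply, Matrix.vecMul, dotProduct, hOi, Finset.mul_sum,
        Finset.sum_mul, mul_comm]
    have hsum : (Tiz i * Tio i) j = ∑ r, Tiz i j r • Tio i r := by
      funext c; simp [Matrix.mul_apply, Finset.sum_apply]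
    rw [hsum]
    exact Submodule.sum_mem _ fun r _ => Submodule.smul_mem _ _ (key r)
end

section
/- (Robustness of the delayed distributed observer.) Let A be an n×n real matrix, let d : ℝ → ℝⁿ be continuous, and let x : ℝ → ℝⁿ be differentiable with x'(s) = A·x(s) + d(s) for every s ∈ ℝ. Let τ̄ ≥ 0, t_δ ≥ 0, let M be an invertible n×n real matrix, and suppose the stacked local estimates ẑ : ℝ → ℝⁿ satisfy ẑ(s) = M·x(s) + e(s) for every s ≥ t_δ, where e : ℝ → ℝⁿ is the local estimation error. Define x̂(t) = exp(τ̄·A)·M⁻¹·ẑ(t−τ̄). Then for every t ≥ τ̄ + t_δ: (i) x̂(t) − x(t) = exp(τ̄·A)·M⁻¹·e(t−τ̄) − ∫_{t−τ̄}^{t} exp((t−s)·A)·d(s) ds; and (ii) if in addition ‖e(s)‖ ≤ ε̄ for all s ≥ t_δ and ‖d(s)‖ ≤ d̄ for all s, then ‖x̂(t) − x(t)‖ ≤ ‖exp(τ̄·A)·M⁻¹‖_op · ε̄ + τ̄ · d̄ · sup_{u∈[0,τ̄]} ‖exp(u·A)‖_op. In particular the distributed state estimate remains bounded for bounded process disturbance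 and bounded local estimation error. -/
open NormedSpace

set_option maxHeartbeats 1000000

lemma aux_continuous (n : ℕ) :
    Continuous (Matrix.toEuclideanCLM (𝕜 := ℝ) (n := Fin n)) := by
  let L : Matrix (Fin n) (Fin n) ℝ →ₗ[ℝ]
      (EuclideanSpace ℝ (Fin n) →L[ℝ] EuclideanSpace ℝ (Fin n)) :=
    { toFun := Matrix.toEuclideanCLM (𝕜 := ℝ),
      map_add' := fun a b => map_add _ a b,
      map_smul' := fun c a => map_smul _ c a }
  exact L.continuous_of_finiteDimensional

lemma aux_exp (n : ℕ) (A : Matrix (Fin n) (Fin n) ℝ) :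
    Matrix.toEuclideanCLM (𝕜 := ℝ) (exp A)
      = exp (Matrix.toEuclideanCLM (𝕜 := ℝ) A) := by
  letI : SeminormedRing (Matrix (Fin n) (Fin n) ℝ) := Matrix.linftyOpSemiNormedRing
  letI : NormedRing (Matrix (Fin n) (Fin n) ℝ) := Matrix.linftyOpNormedRing
  letI : NormedAlgebra ℝ (Matrix (Fin n) (Fin n) ℝ) := Matrix.linftyOpNormedAlgebra
  exact map_exp_of_mem_ball (𝕂 := ℝ) (Matrix.toEuclideanCLM (𝕜 := ℝ)) (aux_continuous n) A
    ((expSeries_radius_eq_top ℝ (Matrix (Fin n) (Fin n) ℝ)).symm ▸ edist_lt_top _ _)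


/-- Robustness of the delayed distributed observer: with plant
`ẋ = A x + d`, noisy stacked local estimates `ẑ(s) = M·x(s) + e(s)` for
`s ≥ t_δ` (`M` invertible), and the delay-compensated estimate
`x̂(t) = exp(τ̄·A)·M⁻¹·ẑ(t−τ̄)`, for every `t ≥ τ̄ + t_δ` the estimation
error decomposes as
`x̂(t) − x(t) = exp(τ̄·A)·M⁻¹·e(t−τ̄) − ∫_{t−τ̄}^t exp((t−s)A)·d(s) ds`,
and if `‖e‖ ≤ ε̄` (for `s ≥ t_δ`) and `‖d‖ ≤ d̄`, it is bounded by
`‖exp(τ̄A)M⁻¹‖_op·ε̄ + τ̄·d̄·sup_{u∈[0,τ̄]}‖exp(uA)‖_op`. -/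
theorem distributed_observer_robustness
    (n : ℕ) (A : Matrix (Fin n) (Fin n) ℝ)
    (d : ℝ → EuclideanSpace ℝ (Fin n)) (hd : Continuous d)
    (x : ℝ → EuclideanSpace ℝ (Fin n))
    (hx : ∀ s : ℝ, HasDerivAt x ((Matrix.toEuclideanCLM (𝕜 := ℝ) A) (x s) + d s) s)
    (τbar tδ : ℝ) (hτ : 0 ≤ τbar) (htδ : 0 ≤ tδ)
    (M : Matrix (Fin n) (Fin n) ℝ) (hM : IsUnit M)
    (zhat e : ℝ → EuclideanSpace ℝ (Fin n))
    (hzhat : ∀ s : ℝ, tδ ≤ s → zhat s = (Matrix.toEuclideanCLM (𝕜 := ℝ) M) (x s) + e s)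
    (xhat : ℝ → EuclideanSpace ℝ (Fin n))
    (hxhat : xhat = fun t =>
      (Matrix.toEuclideanCLM (𝕜 := ℝ) (exp (τbar • A)))
        ((Matrix.toEuclideanCLM (𝕜 := ℝ) M⁻¹) (zhat (t - τbar)))) :
    ∀ t : ℝ, τbar + tδ ≤ t →
      (xhat t - x t
          = (Matrix.toEuclideanCLM (𝕜 := ℝ) (exp (τbar • A) * M⁻¹)) (e (t - τbar))
            - ∫ s in (t - τbar)..t,
                (Matrix.toEuclideanCLM (𝕜 := ℝ) (exp ((t - s) • A))) (d s)) ∧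
      (∀ εbar dbar : ℝ,
        (∀ s : ℝ, tδ ≤ s → ‖e s‖ ≤ εbar) → (∀ s : ℝ, ‖d s‖ ≤ dbar) →
        ‖xhat t - x t‖
          ≤ ‖(Matrix.toEuclideanCLM (𝕜 := ℝ) (exp (τbar • A) * M⁻¹) :
                EuclideanSpace ℝ (Fin n) →L[ℝ] EuclideanSpace ℝ (Fin n))‖ * εbar
            + τbar * dbar * ⨆ u ∈ Set.Icc (0:ℝ) τbar,
                ‖(Matrix.toEuclideanCLM (𝕜 := ℝ) (exp (u • A)) :
                    EuclideanSpace ℝ (Fin n) →L[ℝ] EuclideanSpace ℝ (Fin n))‖) := by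
  intro t ht
  set T := Matrix.toEuclideanCLM (𝕜 := ℝ) (n := Fin n) with hT
  set B : EuclideanSpace ℝ (Fin n) →L[ℝ] EuclideanSpace ℝ (Fin n) := T A with hB
  have hexp : ∀ u : ℝ, T (exp (u • A)) = exp (u • B) := by
    intro u
    rw [hT, aux_exp n (u • A), map_smul]
  -- variation of constants
  have hg : ∀ s : ℝ, HasDerivAt (fun s => exp ((t - s) • B) (x s))
      (exp ((t - s) • B) (d s)) s := by
    intro s
    have h1 : HasDerivAt (fun u : ℝ => exp (u • B)) (exp ((t - s) • B) * B) (t - s) :=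
      hasDerivAt_exp_smul_const B (t - s)
    have h2 : HasDerivAt (fun s : ℝ => t - s) (-1 : ℝ) s := by
      simpa using (hasDerivAt_id s).const_sub t
    have h3 : HasDerivAt (fun s : ℝ => exp ((t - s) • B))
        ((-1 : ℝ) • (exp ((t - s) • B) * B)) s := HasDerivAt.scomp s h1 h2
    have h4 := h3.clm_apply (hx s)
    refine h4.congr_deriv ?_
    simp only [ContinuousLinearMap.smul_apply, ContinuousLinearMap.mul_apply, map_add,
      neg_smul, one_smul, hB, ContinuousLinearMap.coe_smul', Pi.smul_apply,
      ContinuousLinearMap.coe_mul, Function.comp_apply]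
    abel
  have hci : Continuous fun s : ℝ => exp ((t - s) • B) (d s) := by
    exact (((continuous_iff_continuousAt.2 fun y => (exp_analytic (𝕂 := ℝ) y).continuousAt).comp ((continuous_const.sub continuous_id).smul
      continuous_const))).clm_apply hd
  have hInt : (∫ s in (t - τbar)..t, exp ((t - s) • B) (d s))
      = x t - exp (τbar • B) (x (t - τbar)) := by
    have := intervalIntegral.integral_eq_sub_of_hasDerivAt
      (f := fun s => exp ((t - s) • B) (x s)) (a := t - τbar) (b := t)
      (fun s _ => hg s) (hci.intervalIntegrable _ _)
    rw [this]
    simp only [sub_self, sub_sub_cancel]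
    rw [show (0:ℝ) • B = 0 from zero_smul ℝ B, exp_zero, ContinuousLinearMap.one_apply]
  have htδ' : tδ ≤ t - τbar := by linarith
  have hMinv : (M⁻¹ * M) = 1 := Matrix.nonsing_inv_mul M ((Matrix.isUnit_iff_isUnit_det M).mp hM)
  have hdecomp : xhat t - x t
      = T (exp (τbar • A) * M⁻¹) (e (t - τbar))
        - ∫ s in (t - τbar)..t, T (exp ((t - s) • A)) (d s) := by
    have hz := hzhat (t - τbar) htδ'
    have hIeq : (∫ s in (t - τbar)..t, T (exp ((t - s) • A)) (d s))
        = ∫ s in (t - τbar)..t, exp ((t - s) • B) (d s) := by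
      congr 1; funext s; rw [hexp]
    rw [hxhat, hIeq, hInt]
    simp only
    rw [hz]
    have e1 : T M⁻¹ (T M (x (t - τbar)) + e (t - τbar))
        = x (t - τbar) + T M⁻¹ (e (t - τbar)) := by
      rw [map_add]
      congr 1
      have : T M⁻¹ (T M (x (t - τbar))) = T (M⁻¹ * M) (x (t - τbar)) := by
        rw [map_mul]; rfl
      rw [this, hMinv, map_one]; rfl
    rw [e1, map_add]
    have e2 : T (exp (τbar • A)) (T M⁻¹ (e (t - τbar)))
        = T (exp (τbar • A) * M⁻¹) (e (t - τbar)) := by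
      rw [map_mul]; rfl
    rw [e2, hexp τbar]
    abel
  refine ⟨hdecomp, ?_⟩
  intro εbar dbar he hdb
  rw [hdecomp]
  set S := ⨆ u ∈ Set.Icc (0:ℝ) τbar, ‖T (exp (u • A))‖ with hS
  have hfc : Continuous fun u : ℝ => ‖T (exp (u • A))‖ := by
    have : (fun u : ℝ => ‖T (exp (u • A))‖) = fun u : ℝ => ‖exp (u • B)‖ := by
      funext u; rw [hexp]
    rw [this]
    exact continuous_norm.comp ((continuous_iff_continuousAt.2 fun y => (exp_analytic (𝕂 := ℝ) y).continuousAt).comp (continuous_id.smul continuous_const))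
  obtain ⟨C, hC⟩ : BddAbove ((fun u => ‖T (exp (u • A))‖) '' Set.Icc (0:ℝ) τbar) :=
    (isCompact_Icc.image hfc).bddAbove
  have hbddr : BddAbove (Set.range fun u =>
      ⨆ _ : u ∈ Set.Icc (0:ℝ) τbar, ‖T (exp (u • A))‖) := by
    refine ⟨max C 0, ?_⟩
    rintro _ ⟨u, rfl⟩
    show (⨆ _ : u ∈ Set.Icc (0:ℝ) τbar, ‖T (exp (u • A))‖) ≤ max C 0
    by_cases hu : u ∈ Set.Icc (0:ℝ) τbar
    · rw [ciSup_pos (f := fun _ : u ∈ Set.Icc (0:ℝ) τbar => ‖T (exp (u • A))‖) hu]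
      exact le_max_of_le_left (hC ⟨u, hu, rfl⟩)
    · haveI : IsEmpty (u ∈ Set.Icc (0:ℝ) τbar) := isEmpty_Prop.mpr hu
      rw [Real.iSup_of_isEmpty]
      exact le_max_right _ _
  have hmem : ∀ v ∈ Set.Icc (0:ℝ) τbar, ‖T (exp (v • A))‖ ≤ S := by
    intro v hv
    have h1 : ‖T (exp (v • A))‖
        = ⨆ _ : v ∈ Set.Icc (0:ℝ) τbar, ‖T (exp (v • A))‖ :=
      (ciSup_pos (f := fun _ : v ∈ Set.Icc (0:ℝ) τbar => ‖T (exp (v • A))‖) hv).symm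
    rw [hS, h1]
    exact le_ciSup hbddr v
  have hS0 : (0:ℝ) ≤ S := le_trans (norm_nonneg _) (hmem 0 ⟨le_rfl, hτ⟩)
  have hdbar0 : (0:ℝ) ≤ dbar := le_trans (norm_nonneg _) (hdb 0)
  have hb1 : ‖T (exp (τbar • A) * M⁻¹) (e (t - τbar))‖
      ≤ ‖T (exp (τbar • A) * M⁻¹)‖ * εbar :=
    le_trans ((T (exp (τbar • A) * M⁻¹)).le_opNorm _)
      (mul_le_mul_of_nonneg_left (he _ htδ') (norm_nonneg _))
  have hb2 : ‖∫ s in (t - τbar)..t, T (exp ((t - s) • A)) (d s)‖ ≤ S * dbar * τbar := by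
    have h := intervalIntegral.norm_integral_le_of_norm_le_const
      (f := fun s => T (exp ((t - s) • A)) (d s)) (a := t - τbar) (b := t)
      (C := S * dbar) ?_
    · have : |t - (t - τbar)| = τbar := by
        rw [abs_of_nonneg] <;> linarith
      rw [this] at h
      exact h
    · intro s hs
      rw [Set.uIoc_of_le (by linarith : t - τbar ≤ t)] at hs
      have hts : t - s ∈ Set.Icc (0:ℝ) τbar := ⟨by linarith [hs.2], by linarith [hs.1]⟩
      calc ‖T (exp ((t - s) • A)) (d s)‖
          ≤ ‖T (exp ((t - s) • A))‖ * ‖d s‖ := (T _).le_opNorm _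
        _ ≤ S * dbar := mul_le_mul (hmem _ hts) (hdb s) (norm_nonneg _) hS0
  calc ‖T (exp (τbar • A) * M⁻¹) (e (t - τbar))
        - ∫ s in (t - τbar)..t, T (exp ((t - s) • A)) (d s)‖
      ≤ ‖T (exp (τbar • A) * M⁻¹) (e (t - τbar))‖
        + ‖∫ s in (t - τbar)..t, T (exp ((t - s) • A)) (d s)‖ := norm_sub_le _ _
    _ ≤ ‖T (exp (τbar • A) * M⁻¹)‖ * εbar + S * dbar * τbar := add_le_add hb1 hb2
    _ = ‖T (exp (τbar • A) * M⁻¹)‖ * εbar + τbar * dbar * S := by ring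
end
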